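/- Let C be a set of k-clauses over variables x_1,…,x_n (k ≥ 2) such that for every nonempty set D of variables, the number of clauses of C using only variables from D is at most 2|D|/k. Then ⋀C is satisfiable. -/

import Mathlib

/-- If a set `C` of `k`-clauses (`k ≥ 2`) over finitely many variables is such that every
nonempty set `D` of variables supports at most `2|D|/k` clauses of `C`, then the
conjunction of the clauses in `C` is satisfiable. -/
theorem sparse_clauses_satisfiable
    (V : Type*) [DecidableEq V] (k : ℕ) (hk : 2 ≤ k)
    (C : Finset (Finset (V × Bool)))
    (hcard : ∀ c ∈ C, c.card = k)
    (hdistinct : ∀ c ∈ C, ∀ l₁ ∈ c, ∀ l₂ ∈ c, l₁.1 = l₂.1 → l₁ = l₂)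
    (hsparse : ∀ D : Finset V, D.Nonempty →
      (C.filter (fun c => ∀ l ∈ c, l.1 ∈ D)).card * k ≤ 2 * D.card) :
    ∃ σ : V → Bool, ∀ c ∈ C, ∃ l ∈ c, σ l.1 = l.2 := by
  classical
  have hall : ∀ s : Finset {c : Finset (V × Bool) // c ∈ C},
      s.card ≤ (s.biUnion (fun c => c.1.image Prod.fst)).card := by
    intro s
    rcases s.eq_empty_or_nonempty with rfl | hs
    · simp
    set D := s.biUnion (fun c => c.1.image Prod.fst) with hD
    have hDne : D.Nonempty := by
      obtain ⟨c, hc⟩ := hs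
      have hne : c.1.Nonempty := by
        rw [← Finset.card_pos, hcard c.1 c.2]; omega
      obtain ⟨l, hl⟩ := hne
      exact ⟨l.1, Finset.mem_biUnion.2 ⟨c, hc, Finset.mem_image_of_mem _ hl⟩⟩
    have hsub : s.card ≤ (C.filter (fun c => ∀ l ∈ c, l.1 ∈ D)).card := by
      apply Finset.card_le_card_of_injOn (fun c => c.1)
      · intro c hc
        simp only [Finset.mem_coe, Finset.mem_filter]
        exact ⟨c.2, fun l hl => Finset.mem_biUnion.2 ⟨c, hc, Finset.mem_image_of_mem _ hl⟩⟩
      · intro a _ b _ h; exact Subtype.ext h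
    have h1 := hsparse D hDne
    have h2 : s.card * k ≤ (C.filter (fun c => ∀ l ∈ c, l.1 ∈ D)).card * k :=
      Nat.mul_le_mul_right _ hsub
    nlinarith [s.card.zero_le]
  obtain ⟨f, hf_inj, hf_mem⟩ :=
    (Finset.all_card_le_biUnion_card_iff_existsInjective'
      (fun c : {c : Finset (V × Bool) // c ∈ C} => c.1.image Prod.fst)).1 hall
  have hb : ∀ c : {c : Finset (V × Bool) // c ∈ C}, ∃ b, (f c, b) ∈ c.1 := by
    intro c
    obtain ⟨⟨v, b⟩, hl, hv⟩ := Finset.mem_image.1 (hf_mem c)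
    exact ⟨b, by simpa [← hv] using hl⟩
  choose b hbmem using hb
  refine ⟨fun v => if h : ∃ c, f c = v then b h.choose else false, fun c hc => ?_⟩
  refine ⟨(f ⟨c, hc⟩, b ⟨c, hc⟩), hbmem _, ?_⟩
  have h : ∃ c', f c' = f ⟨c, hc⟩ := ⟨_, rfl⟩
  simp only [dif_pos h]
  exact congrArg b (hf_inj h.choose_spec)
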